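/- For 1 ≤ k ≤ n−1, the number of forests on {1,…,n} consisting of k rooted trees with roots exactly 1,…,k, in which vertex n is a descendant of vertex 1, equals n^(n−k−1). -/

import Mathlib

namespace ForestAux
variable {n : ℕ}
def Per (f : Fin n → Fin n) (v : Fin n) : Prop := ∃ j, 0 < j ∧ f^[j] v = v


lemma per_mul {f : Fin n → Fin n} {v : Fin n} {j : ℕ} (h : f^[j] v = v) (t : ℕ) :
    f^[t * j] v = v := by
  rw [mul_comm, Function.iterate_mul]
  exact Function.iterate_fixed h t

lemma per_ret {f : Fin n → Fin n} {v : Fin n} (h : Per f v) (i : ℕ) :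
    ∃ s, f^[s] (f^[i] v) = v := by
  obtain ⟨j, hj, hfix⟩ := h
  have h1 : i ≤ (i + 1) * j := by nlinarith
  refine ⟨(i + 1) * j - i, ?_⟩
  rw [← Function.iterate_add_apply]
  have h2 : (i + 1) * j - i + i = (i + 1) * j := by omega
  rw [h2]
  exact per_mul hfix _

lemma per_apply {f : Fin n → Fin n} {v : Fin n} (h : Per f v) : Per f (f v) := by
  obtain ⟨j, hj, hfix⟩ := h
  exact ⟨j, hj, by rw [← Function.iterate_succ_apply, Function.iterate_succ_apply', hfix]⟩

lemma per_iterate {f : Fin n → Fin n} {v : Fin n} (h : Per f v) (i : ℕ) : Per f (f^[i] v) := by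
  induction i with
  | zero => exact h
  | succ i ih => rw [Function.iterate_succ_apply']; exact per_apply ih

lemma per_aux {f : Fin n → Fin n} {v : Fin n} {j a b : ℕ} (hjfix : f^[j] v = v)
    (hab : f^[a] v = f^[b] v) (h1 : a < b) (h2 : b ≤ j) : f^[j - b + a] v = v := by
  have hb : f^[j - b] (f^[b] v) = v := by
    rw [← Function.iterate_add_apply]
    have : j - b + b = j := by omega
    rw [this, hjfix]
  rw [← hab, ← Function.iterate_add_apply] at hb
  exact hb

lemma per_bdd {f : Fin n → Fin n} {v : Fin n} (h : Per f v) :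
    ∃ j ∈ Finset.Icc 1 n, f^[j] v = v := by
  classical
  have hex : ∃ j, 0 < j ∧ f^[j] v = v := h
  obtain ⟨hj0, hjfix⟩ := Nat.find_spec hex
  have hmin := fun m hm => Nat.find_min hex (m := m) hm
  have hinj : Function.Injective (fun i : Fin (Nat.find hex) => f^[i.val] v) := by
    intro a b hab
    simp only at hab
    by_contra hne
    have hne' : a.val ≠ b.val := fun h => hne (Fin.ext h)
    rcases Nat.lt_or_ge a.val b.val with hlt | hge
    · have hfix2 := per_aux hjfix hab hlt (le_of_lt b.isLt)
      have hlt2 : Nat.find hex - b.val + a.val < Nat.find hex := by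
        have := b.isLt; omega
      exact hmin _ hlt2 ⟨by have := b.isLt; omega, hfix2⟩
    · have hlt : b.val < a.val := by omega
      have hfix2 := per_aux hjfix hab.symm hlt (le_of_lt a.isLt)
      have hlt2 : Nat.find hex - a.val + b.val < Nat.find hex := by
        have := a.isLt; omega
      exact hmin _ hlt2 ⟨by have := a.isLt; omega, hfix2⟩
  have hcard := Fintype.card_le_of_injective _ hinj
  simp only [Fintype.card_fin] at hcard
  exact ⟨Nat.find hex, Finset.mem_Icc.mpr ⟨hj0, hcard⟩, hjfix⟩


end ForestAux

namespace ForestDef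
open ForestAux
variable {m : ℕ}
open scoped Classical

def zz : Fin (m + 2) := ⟨0, by omega⟩
def ll : Fin (m + 2) := ⟨m + 1, by omega⟩

/-- number of steps from `ll` to the root set -/
noncomputable def mp (k : ℕ) (p : Fin (m + 2) → Fin (m + 2)) : ℕ :=
  if h : ∃ i, ((p^[i]) ll).val < k then Nat.find h else 0

noncomputable def wInt (k : ℕ) (p : Fin (m + 2) → Fin (m + 2)) : List (Fin (m + 2)) :=
  (List.range (mp k p - 1)).map (fun i => p^[i + 1] ll)

noncomputable def sC (k : ℕ) (p : Fin (m + 2) → Fin (m + 2)) : List (Fin (m + 2)) :=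
  (wInt k p).toFinset.sort (· ≤ ·)

noncomputable def toF (k : ℕ) (p : Fin (m + 2) → Fin (m + 2)) : Fin (m + 2) → Fin (m + 2) :=
  fun v => if v.val < k then v else if v = ll then zz
    else if v ∈ sC k p then (wInt k p).getD ((sC k p).idxOf v) zz else p v

noncomputable def cSet (k : ℕ) (f : Fin (m + 2) → Fin (m + 2)) : Finset (Fin (m + 2)) :=
  Finset.univ.filter (fun v => ¬ v.val < k ∧ ∃ j ∈ Finset.Icc 1 (m + 2), f^[j] v = v)

noncomputable def l1 (k : ℕ) (f : Fin (m + 2) → Fin (m + 2)) : List (Fin (m + 2)) :=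
  (cSet k f).sort (· ≤ ·)

noncomputable def wf (k : ℕ) (f : Fin (m + 2) → Fin (m + 2)) : List (Fin (m + 2)) :=
  (l1 k f).map f

noncomputable def toP (k : ℕ) (f : Fin (m + 2) → Fin (m + 2)) : Fin (m + 2) → Fin (m + 2) :=
  fun v => if v.val < k then v else if v = ll then (wf k f).getD 0 zz
    else if v ∈ wf k f then (wf k f).getD ((wf k f).idxOf v + 1) zz else f v

def PP (k : ℕ) (p : Fin (m + 2) → Fin (m + 2)) : Prop :=
  (∀ v, p v = v ↔ v.val < k) ∧ (∀ v, ∃ i, (p^[i] v).val < k) ∧ ∃ i, p^[i] ll = zz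

def FF (k : ℕ) (f : Fin (m + 2) → Fin (m + 2)) : Prop :=
  (∀ v, v.val < k → f v = v) ∧ f ll = zz

end ForestDef

namespace ForestDef
open ForestAux
open scoped Classical
variable {m k : ℕ} {p f : Fin (m + 2) → Fin (m + 2)}

lemma ll_not_root (hk2 : k ≤ m + 1) : ¬ (ll : Fin (m + 2)).val < k := by
  simp [ll]; omega

lemma zz_root (hk : 1 ≤ k) : (zz : Fin (m + 2)).val < k := by simp [zz]; omega

lemma zz_ne_ll : (zz : Fin (m + 2)) ≠ ll := by simp [zz, ll, Fin.ext_iff]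

lemma iter_root_fix (hp1 : ∀ v, p v = v ↔ v.val < k) {v : Fin (m + 2)} (h : v.val < k) (s : ℕ) :
    p^[s] v = v := Function.iterate_fixed ((hp1 v).mpr h) s

lemma mp_spec (hp2 : ∀ v : Fin (m + 2), ∃ i, (p^[i] v).val < k) :
    ((p^[mp k p]) ll).val < k := by
  have h : ∃ i, ((p^[i]) (ll : Fin (m + 2))).val < k := hp2 ll
  rw [mp, dif_pos h]; exact Nat.find_spec h

lemma mp_min (hp2 : ∀ v : Fin (m + 2), ∃ i, (p^[i] v).val < k) {i : ℕ} (hi : i < mp k p) :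
    ¬ ((p^[i]) (ll : Fin (m + 2))).val < k := by
  have h : ∃ i, ((p^[i]) (ll : Fin (m + 2))).val < k := hp2 ll
  rw [mp, dif_pos h] at hi; exact Nat.find_min h hi

lemma mp_pos (hk2 : k ≤ m + 1) (hp2 : ∀ v : Fin (m + 2), ∃ i, (p^[i] v).val < k) :
    0 < mp k p := by
  rcases Nat.eq_zero_or_pos (mp k p) with h | h
  · exfalso
    have := mp_spec hp2 (p := p)
    rw [h] at this
    exact ll_not_root hk2 this
  · exact h

lemma spine_inj (hp2 : ∀ v : Fin (m + 2), ∃ i, (p^[i] v).val < k) {i j : ℕ}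
    (hij : i < j) (hj : j ≤ mp k p) : p^[i] (ll : Fin (m + 2)) ≠ p^[j] ll := by
  intro heq
  have key : p^[mp k p - j + i] (ll : Fin (m + 2)) = p^[mp k p] ll := by
    have : p^[mp k p - j] (p^[j] (ll : Fin (m + 2))) = p^[mp k p] ll := by
      rw [← Function.iterate_add_apply]
      congr 1; omega
    rw [← heq, ← Function.iterate_add_apply] at this
    rw [← this]
  have hroot : ((p^[mp k p - j + i]) (ll : Fin (m + 2))).val < k := by
    rw [key]; exact mp_spec hp2
  exact mp_min hp2 (by omega) hroot

lemma top_z (hk : 1 ≤ k) (hp1 : ∀ v, p v = v ↔ v.val < k)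
    (hp2 : ∀ v : Fin (m + 2), ∃ i, (p^[i] v).val < k)
    (hp3 : ∃ i, p^[i] (ll : Fin (m + 2)) = zz) : p^[mp k p] (ll : Fin (m + 2)) = zz := by
  obtain ⟨i, hi⟩ := hp3
  rcases Nat.lt_or_ge i (mp k p) with h | h
  · exfalso
    exact mp_min hp2 h (by rw [hi]; exact zz_root hk)
  · have h2 : p^[i] (ll : Fin (m + 2)) = p^[mp k p] ll := by
      have h3 := Function.iterate_add_apply p (i - mp k p) (mp k p) (ll : Fin (m + 2))
      rw [show i - mp k p + mp k p = i by omega] at h3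
      rw [h3, iter_root_fix hp1 (mp_spec hp2)]
    rw [← h2, hi]

lemma wInt_length : (wInt k p).length = mp k p - 1 := by simp [wInt]

lemma wInt_getElem {i : ℕ} (h : i < (wInt k p).length) :
    (wInt k p)[i] = p^[i + 1] (ll : Fin (m + 2)) := by
  simp [wInt]

lemma mem_wInt_iff {x : Fin (m + 2)} :
    x ∈ wInt k p ↔ ∃ i, i < mp k p - 1 ∧ x = p^[i + 1] (ll : Fin (m + 2)) := by
  simp [wInt, List.mem_map, eq_comm]

lemma wInt_nodup (hp2 : ∀ v : Fin (m + 2), ∃ i, (p^[i] v).val < k) : (wInt k p).Nodup := by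
  rw [List.nodup_iff_injective_get]
  intro a b hab
  by_contra hne
  have ha := a.isLt; have hb := b.isLt
  rw [List.get_eq_getElem, List.get_eq_getElem, wInt_getElem, wInt_getElem] at hab
  have hlen : (wInt k p).length = mp k p - 1 := wInt_length
  rcases Nat.lt_or_ge a.val b.val with h | h
  · exact spine_inj hp2 (by omega) (by omega) hab
  · have : b.val < a.val := by
      rcases Nat.lt_or_ge b.val a.val with h' | h'
      · exact h'
      · exact absurd (Fin.ext (by omega)) hne
    exact spine_inj hp2 (by omega) (by omega) hab.symm

lemma wInt_not_root (hp2 : ∀ v : Fin (m + 2), ∃ i, (p^[i] v).val < k) {x : Fin (m + 2)}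
    (hx : x ∈ wInt k p) : ¬ x.val < k := by
  obtain ⟨i, hi, rfl⟩ := mem_wInt_iff.mp hx
  exact mp_min hp2 (by omega)

lemma wInt_ne_ll (hk2 : k ≤ m + 1) (hp2 : ∀ v : Fin (m + 2), ∃ i, (p^[i] v).val < k)
    {x : Fin (m + 2)} (hx : x ∈ wInt k p) : x ≠ ll := by
  obtain ⟨i, hi, rfl⟩ := mem_wInt_iff.mp hx
  intro h
  exact spine_inj hp2 (show 0 < i + 1 by omega) (by omega) (by
    simpa using h.symm)

end ForestDef

namespace ForestDef
open ForestAux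
open scoped Classical
variable {m k : ℕ} {p f : Fin (m + 2) → Fin (m + 2)}

lemma sC_nodup : (sC k p).Nodup := (wInt k p).toFinset.sort_nodup _

lemma mem_sC_iff {x : Fin (m + 2)} : x ∈ sC k p ↔ x ∈ wInt k p := by
  simp [sC, Finset.mem_sort, List.mem_toFinset]

lemma sC_length (hp2 : ∀ v : Fin (m + 2), ∃ i, (p^[i] v).val < k) :
    (sC k p).length = (wInt k p).length := by
  rw [sC, Finset.length_sort, List.toFinset_card_of_nodup (wInt_nodup hp2)]

lemma toF_root {v : Fin (m + 2)} (h : v.val < k) : toF k p v = v := by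
  simp [toF, h]

lemma toF_ll (hk2 : k ≤ m + 1) : toF k p (ll : Fin (m + 2)) = zz := by
  simp [toF, ll_not_root hk2]

lemma toF_mem (hk2 : k ≤ m + 1) (hp2 : ∀ v : Fin (m + 2), ∃ i, (p^[i] v).val < k)
    {v : Fin (m + 2)} (h : v ∈ sC k p) :
    toF k p v = (wInt k p).getD ((sC k p).idxOf v) zz := by
  have h1 : ¬ v.val < k := wInt_not_root hp2 (mem_sC_iff.mp h)
  have h2 : v ≠ ll := wInt_ne_ll hk2 hp2 (mem_sC_iff.mp h)
  simp [toF, h1, h2, h]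

lemma toF_else {v : Fin (m + 2)} (h1 : ¬ v.val < k) (h2 : v ≠ ll) (h3 : v ∉ sC k p) :
    toF k p v = p v := by
  simp [toF, h1, h2, h3]

lemma toF_get (hk2 : k ≤ m + 1) (hp2 : ∀ v : Fin (m + 2), ∃ i, (p^[i] v).val < k)
    {i : ℕ} (h : i < (sC k p).length) :
    toF k p ((sC k p)[i]) = (wInt k p)[i]'(by rw [← sC_length hp2]; exact h) := by
  have hmem : (sC k p)[i] ∈ sC k p := List.getElem_mem h
  rw [toF_mem hk2 hp2 hmem]
  rw [List.Nodup.idxOf_getElem sC_nodup i h]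
  exact List.getD_eq_getElem _ _ _

lemma map_toF_sC (hk2 : k ≤ m + 1) (hp2 : ∀ v : Fin (m + 2), ∃ i, (p^[i] v).val < k) :
    (sC k p).map (toF k p) = wInt k p := by
  apply List.ext_getElem
  · rw [List.length_map, sC_length hp2]
  · intro i h1 h2
    rw [List.getElem_map]
    exact toF_get hk2 hp2 (by simpa using h1)

lemma FF_toF (hk2 : k ≤ m + 1) : FF k (toF k p) :=
  ⟨fun _ h => toF_root h, toF_ll hk2⟩

end ForestDef

namespace ForestDef
open ForestAux
open scoped Classical
variable {m k : ℕ} {p f : Fin (m + 2) → Fin (m + 2)}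

lemma mem_cSet_iff {x : Fin (m + 2)} : x ∈ cSet k f ↔ ¬ x.val < k ∧ Per f x := by
  simp only [cSet, Finset.mem_filter, Finset.mem_univ, true_and]
  constructor
  · rintro ⟨h1, j, hj, h2⟩
    exact ⟨h1, j, (Finset.mem_Icc.mp hj).1, h2⟩
  · rintro ⟨h1, h2⟩
    exact ⟨h1, per_bdd h2⟩

lemma toF_val_mem (hk2 : k ≤ m + 1) (hp2 : ∀ v : Fin (m + 2), ∃ i, (p^[i] v).val < k)
    {x : Fin (m + 2)} (hx : x ∈ wInt k p) : toF k p x ∈ wInt k p := by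
  rw [← map_toF_sC hk2 hp2]
  exact List.mem_map_of_mem (mem_sC_iff.mpr hx)

lemma toF_inj_wInt (hk2 : k ≤ m + 1) (hp2 : ∀ v : Fin (m + 2), ∃ i, (p^[i] v).val < k)
    {x y : Fin (m + 2)} (hx : x ∈ wInt k p) (hy : y ∈ wInt k p)
    (h : toF k p x = toF k p y) : x = y := by
  have hx' := mem_sC_iff.mpr hx
  have hy' := mem_sC_iff.mpr hy
  have hix : (sC k p).idxOf x < (sC k p).length := List.idxOf_lt_length_iff.mpr hx'
  have hiy : (sC k p).idxOf y < (sC k p).length := List.idxOf_lt_length_iff.mpr hy'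
  have ex : (sC k p)[(sC k p).idxOf x] = x := List.getElem_idxOf hix
  have ey : (sC k p)[(sC k p).idxOf y] = y := List.getElem_idxOf hiy
  have h1 : toF k p x = (wInt k p)[(sC k p).idxOf x]'(by rw [← sC_length hp2]; exact hix) := by
    conv_lhs => rw [← ex]
    exact toF_get hk2 hp2 hix
  have h2 : toF k p y = (wInt k p)[(sC k p).idxOf y]'(by rw [← sC_length hp2]; exact hiy) := by
    conv_lhs => rw [← ey]
    exact toF_get hk2 hp2 hiy
  rw [h1, h2] at h
  have hxy := (List.Nodup.getElem_inj_iff (wInt_nodup hp2)).mp h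
  exact (List.idxOf_inj hx').mp hxy

lemma toF_iter_wInt (hk2 : k ≤ m + 1) (hp2 : ∀ v : Fin (m + 2), ∃ i, (p^[i] v).val < k)
    {x : Fin (m + 2)} (hx : x ∈ wInt k p) (t : ℕ) : (toF k p)^[t] x ∈ wInt k p := by
  induction t with
  | zero => exact hx
  | succ t ih => rw [Function.iterate_succ_apply']; exact toF_val_mem hk2 hp2 ih

lemma toF_cancel (hk2 : k ≤ m + 1) (hp2 : ∀ v : Fin (m + 2), ∃ i, (p^[i] v).val < k)
    {x : Fin (m + 2)} (hx : x ∈ wInt k p) :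
    ∀ a b, a < b → (toF k p)^[a] x = (toF k p)^[b] x → Per (toF k p) x := by
  intro a
  induction a generalizing x with
  | zero =>
    intro b hb h
    exact ⟨b, hb, h.symm⟩
  | succ a ih =>
    intro b hb h
    obtain ⟨b', rfl⟩ : ∃ b', b = b' + 1 := ⟨b - 1, by omega⟩
    rw [Function.iterate_succ_apply', Function.iterate_succ_apply'] at h
    have h' := toF_inj_wInt hk2 hp2 (toF_iter_wInt hk2 hp2 hx a)
      (toF_iter_wInt hk2 hp2 hx b') h
    exact ih hx b' (by omega) h'

lemma per_toF_of_wInt (hk2 : k ≤ m + 1) (hp2 : ∀ v : Fin (m + 2), ∃ i, (p^[i] v).val < k)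
    {x : Fin (m + 2)} (hx : x ∈ wInt k p) : Per (toF k p) x := by
  have hni : ¬ Function.Injective (fun t : Fin (m + 3) => (toF k p)^[t.val] x) := by
    intro hinj
    have := Fintype.card_le_of_injective _ hinj
    simp at this
  rw [Function.not_injective_iff] at hni
  obtain ⟨a, b, hab, hne⟩ := hni
  have hne' : a.val ≠ b.val := fun h => hne (Fin.ext h)
  rcases Nat.lt_or_ge a.val b.val with h | h
  · exact toF_cancel hk2 hp2 hx a.val b.val h hab
  · exact toF_cancel hk2 hp2 hx b.val a.val (by omega) hab.symm

lemma cSet_toF (hk : 1 ≤ k) (hk2 : k ≤ m + 1)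
    (hp1 : ∀ v, p v = v ↔ v.val < k)
    (hp2 : ∀ v : Fin (m + 2), ∃ i, (p^[i] v).val < k) :
    cSet k (toF k p) = (wInt k p).toFinset := by
  ext v
  rw [mem_cSet_iff, List.mem_toFinset]
  constructor
  · rintro ⟨hvroot, hper⟩
    by_cases hW : ∃ t, (toF k p)^[t] v ∈ wInt k p
    · obtain ⟨t, ht⟩ := hW
      obtain ⟨s, hs⟩ := per_ret hper t
      rw [← hs]
      exact toF_iter_wInt hk2 hp2 ht s
    · push_neg at hW
      exfalso
      by_cases hR : ∃ t, ((toF k p)^[t] v).val < k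
      · obtain ⟨t, ht⟩ := hR
        obtain ⟨s, hs⟩ := per_ret hper t
        have : (toF k p)^[s] ((toF k p)^[t] v) = (toF k p)^[t] v :=
          Function.iterate_fixed (toF_root ht) s
        rw [this] at hs
        rw [← hs] at hvroot
        exact hvroot ht
      · rw [not_exists] at hR
        have hL : ∀ t, (toF k p)^[t] v ≠ ll := by
          intro t h
          apply hR (t + 1)
          rw [Function.iterate_succ_apply', h, toF_ll hk2]
          exact zz_root hk
        have heq : ∀ t, (toF k p)^[t] v = p^[t] v := by
          intro t
          induction t with
          | zero => rfl
          | succ t ih =>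
            rw [Function.iterate_succ_apply', Function.iterate_succ_apply', ← ih,
              toF_else (hR t) (hL t) (fun hm => hW t (mem_sC_iff.mp hm))]
        obtain ⟨j, hj, hfix⟩ := hper
        have hperp : Per p v := ⟨j, hj, by rw [← heq j]; exact hfix⟩
        obtain ⟨i, hi⟩ := hp2 v
        obtain ⟨s, hs⟩ := per_ret hperp i
        have : p^[s] (p^[i] v) = p^[i] v := Function.iterate_fixed ((hp1 _).mpr hi) s
        rw [this] at hs
        rw [← hs] at hvroot
        exact hvroot hi
  · intro hv
    exact ⟨wInt_not_root hp2 hv, per_toF_of_wInt hk2 hp2 hv⟩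

end ForestDef

namespace ForestDef
open ForestAux
open scoped Classical
variable {m k : ℕ} {p f : Fin (m + 2) → Fin (m + 2)}

lemma l1_toF (hk : 1 ≤ k) (hk2 : k ≤ m + 1)
    (hp1 : ∀ v, p v = v ↔ v.val < k)
    (hp2 : ∀ v : Fin (m + 2), ∃ i, (p^[i] v).val < k) :
    l1 k (toF k p) = sC k p := by
  rw [l1, cSet_toF hk hk2 hp1 hp2]; rfl

lemma wf_toF (hk : 1 ≤ k) (hk2 : k ≤ m + 1)
    (hp1 : ∀ v, p v = v ↔ v.val < k)
    (hp2 : ∀ v : Fin (m + 2), ∃ i, (p^[i] v).val < k) :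
    wf k (toF k p) = wInt k p := by
  rw [wf, l1_toF hk hk2 hp1 hp2, map_toF_sC hk2 hp2]

lemma toP_toF (hk : 1 ≤ k) (hk2 : k ≤ m + 1)
    (hp1 : ∀ v, p v = v ↔ v.val < k)
    (hp2 : ∀ v : Fin (m + 2), ∃ i, (p^[i] v).val < k)
    (hp3 : ∃ i, p^[i] (ll : Fin (m + 2)) = zz) :
    toP k (toF k p) = p := by
  funext v
  have hwf := wf_toF hk hk2 hp1 hp2
  by_cases hroot : v.val < k
  · rw [toP]
    simp only [if_pos hroot]
    rw [(hp1 v).mpr hroot]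
  by_cases hll : v = ll
  · subst hll
    have hL : toP k (toF k p) ll = (wInt k p).getD 0 zz := by
      rw [toP]
      simp only [if_neg hroot, eq_self_iff_true, if_true, hwf]
    rw [hL]
    rcases Nat.lt_or_ge 0 (wInt k p).length with h | h
    · rw [List.getD_eq_getElem _ _ h, wInt_getElem h]
      simp
    · have hlen : (wInt k p).length = 0 := by omega
      rw [List.getD_eq_default _ _ (by omega)]
      have hmp : mp k p = 1 := by
        have h1 := wInt_length (k := k) (p := p)
        have h2 := mp_pos hk2 hp2 (p := p)
        omega
      have htz := top_z hk hp1 hp2 hp3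
      rw [hmp] at htz
      rw [← htz]
      simp
  by_cases hmem : v ∈ wInt k p
  · have hL : toP k (toF k p) v = (wInt k p).getD ((wInt k p).idxOf v + 1) zz := by
      rw [toP]
      simp only [if_neg hroot, if_neg hll, hwf, if_pos hmem]
    rw [hL]
    set i := (wInt k p).idxOf v with hidef
    have hi : i < (wInt k p).length := List.idxOf_lt_length_iff.mpr hmem
    have hv : (wInt k p)[i] = v := List.getElem_idxOf hi
    have hvit : v = p^[i + 1] (ll : Fin (m + 2)) := by
      rw [← hv]; exact wInt_getElem hi
    have hpv : p v = p^[i + 2] (ll : Fin (m + 2)) := by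
      rw [hvit, ← Function.iterate_succ_apply' p (i + 1)]
    rcases Nat.lt_or_ge (i + 1) (wInt k p).length with h | h
    · rw [List.getD_eq_getElem _ _ h, wInt_getElem h, hpv]
    · rw [List.getD_eq_default _ _ h, hpv]
      have hlen := wInt_length (k := k) (p := p)
      have hidx : i + 2 = mp k p := by omega
      rw [hidx, top_z hk hp1 hp2 hp3]
  · have hL : toP k (toF k p) v = toF k p v := by
      rw [toP]
      simp only [if_neg hroot, if_neg hll, hwf, if_neg hmem]
    rw [hL]
    exact toF_else hroot hll (fun h => hmem (mem_sC_iff.mp h))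

end ForestDef

namespace ForestDef
open ForestAux
open scoped Classical
variable {m k : ℕ} {p f : Fin (m + 2) → Fin (m + 2)}

section Backward

lemma iter_ll (hk : 1 ≤ k) (hf1 : ∀ v : Fin (m + 2), v.val < k → f v = v)
    (hf2 : f ll = zz) (j : ℕ) (hj : 1 ≤ j) : f^[j] (ll : Fin (m + 2)) = zz := by
  induction j with
  | zero => omega
  | succ j ih =>
    rcases Nat.eq_zero_or_pos j with h | h
    · subst h; simpa using hf2
    · rw [Function.iterate_succ_apply', ih h, hf1 zz (zz_root hk)]

lemma ll_not_cSet (hk : 1 ≤ k) (hf1 : ∀ v : Fin (m + 2), v.val < k → f v = v)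
    (hf2 : f ll = zz) : (ll : Fin (m + 2)) ∉ cSet k f := by
  rw [mem_cSet_iff]
  rintro ⟨-, j, hj, hfix⟩
  rw [iter_ll hk hf1 hf2 j hj] at hfix
  exact zz_ne_ll hfix

lemma cSet_not_root {v : Fin (m + 2)} (hv : v ∈ cSet k f) : ¬ v.val < k :=
  (mem_cSet_iff.mp hv).1

lemma cSet_maps (hf1 : ∀ v : Fin (m + 2), v.val < k → f v = v)
    {v : Fin (m + 2)} (hv : v ∈ cSet k f) : f v ∈ cSet k f := by
  rw [mem_cSet_iff] at hv ⊢
  obtain ⟨hroot, hper⟩ := hv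
  refine ⟨?_, per_apply hper⟩
  intro hr
  obtain ⟨s, hs⟩ := per_ret hper 1
  simp only [Function.iterate_one] at hs
  rw [Function.iterate_fixed (hf1 _ hr) s] at hs
  rw [← hs] at hroot
  exact hroot hr

lemma cSet_inj {a b : Fin (m + 2)} (ha : a ∈ cSet k f) (hb : b ∈ cSet k f)
    (h : f a = f b) : a = b := by
  rw [mem_cSet_iff] at ha hb
  obtain ⟨-, ja, hja, hfa⟩ := ha
  obtain ⟨-, jb, hjb, hfb⟩ := hb
  have h1 : f^[ja * jb] a = a := by rw [mul_comm]; exact per_mul hfa jb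
  have h2 : f^[ja * jb] b = b := per_mul hfb ja
  have hJ : 1 ≤ ja * jb := Nat.one_le_iff_ne_zero.mpr (by positivity)
  calc a = f^[ja * jb] a := h1.symm
    _ = f^[ja * jb - 1] (f a) := by
        rw [← Function.iterate_succ_apply]
        congr 1; omega
    _ = f^[ja * jb - 1] (f b) := by rw [h]
    _ = f^[ja * jb] b := by
        rw [← Function.iterate_succ_apply]
        congr 1; omega
    _ = b := h2

lemma l1_nodup : (l1 k f).Nodup := (cSet k f).sort_nodup _

lemma mem_l1_iff {x : Fin (m + 2)} : x ∈ l1 k f ↔ x ∈ cSet k f := Finset.mem_sort _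

lemma l1_length : (l1 k f).length = (cSet k f).card := Finset.length_sort _

lemma wf_length : (wf k f).length = (cSet k f).card := by
  rw [wf, List.length_map, l1_length]

lemma wf_nodup : (wf k f).Nodup := by
  refine List.Nodup.map_on ?_ (l1_nodup)
  intro x hx y hy hxy
  exact cSet_inj (mem_l1_iff.mp hx) (mem_l1_iff.mp hy) hxy

lemma wf_toFinset (hf1 : ∀ v : Fin (m + 2), v.val < k → f v = v) :
    (wf k f).toFinset = cSet k f := by
  apply Finset.eq_of_subset_of_card_le
  · intro x hx
    rw [List.mem_toFinset, wf, List.mem_map] at hx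
    obtain ⟨y, hy, rfl⟩ := hx
    exact cSet_maps hf1 (mem_l1_iff.mp hy)
  · rw [List.toFinset_card_of_nodup (wf_nodup (f := f))]
    rw [wf_length]

lemma mem_wf_iff (hf1 : ∀ v : Fin (m + 2), v.val < k → f v = v) {x : Fin (m + 2)} :
    x ∈ wf k f ↔ x ∈ cSet k f := by
  rw [← wf_toFinset hf1, List.mem_toFinset]

end Backward
end ForestDef

namespace ForestDef
open ForestAux
open scoped Classical
variable {m k : ℕ} {p f : Fin (m + 2) → Fin (m + 2)}

lemma toP_root {v : Fin (m + 2)} (h : v.val < k) : toP k f v = v := by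
  simp [toP, h]

lemma toP_ll (hk2 : k ≤ m + 1) : toP k f (ll : Fin (m + 2)) = (wf k f).getD 0 zz := by
  simp [toP, ll_not_root hk2]

lemma toP_mem (hk : 1 ≤ k) (hf1 : ∀ v : Fin (m + 2), v.val < k → f v = v)
    (hf2 : f ll = zz) {v : Fin (m + 2)} (h : v ∈ wf k f) :
    toP k f v = (wf k f).getD ((wf k f).idxOf v + 1) zz := by
  have h1 : ¬ v.val < k := cSet_not_root ((mem_wf_iff hf1).mp h)
  have h2 : v ≠ ll := by
    intro he
    exact ll_not_cSet hk hf1 hf2 ((mem_wf_iff hf1).mp (he ▸ h))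
  simp [toP, h1, h2, h]

lemma toP_else {v : Fin (m + 2)} (h1 : ¬ v.val < k) (h2 : v ≠ ll) (h3 : v ∉ wf k f) :
    toP k f v = f v := by
  simp [toP, h1, h2, h3]

lemma spine_toP (hk : 1 ≤ k) (hk2 : k ≤ m + 1)
    (hf1 : ∀ v : Fin (m + 2), v.val < k → f v = v) (hf2 : f ll = zz) :
    ∀ i, i ≤ (wf k f).length → (toP k f)^[i + 1] (ll : Fin (m + 2)) = (wf k f).getD i zz := by
  intro i
  induction i with
  | zero =>
    intro _
    simpa using toP_ll hk2 (f := f)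
  | succ i ih =>
    intro hi
    have hilt : i < (wf k f).length := by omega
    rw [Function.iterate_succ_apply', ih (by omega)]
    rw [List.getD_eq_getElem _ _ hilt]
    have hmem : (wf k f)[i] ∈ wf k f := List.getElem_mem hilt
    rw [toP_mem hk hf1 hf2 hmem, List.Nodup.idxOf_getElem (wf_nodup (f := f)) i hilt]

lemma spine_toP_top (hk : 1 ≤ k) (hk2 : k ≤ m + 1)
    (hf1 : ∀ v : Fin (m + 2), v.val < k → f v = v) (hf2 : f ll = zz) :
    (toP k f)^[(wf k f).length + 1] (ll : Fin (m + 2)) = zz := by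
  rw [spine_toP hk hk2 hf1 hf2 _ le_rfl, List.getD_eq_default _ _ le_rfl]

lemma mp_toP (hk : 1 ≤ k) (hk2 : k ≤ m + 1)
    (hf1 : ∀ v : Fin (m + 2), v.val < k → f v = v) (hf2 : f ll = zz) :
    mp k (toP k f) = (wf k f).length + 1 := by
  have hex : ∃ i, (((toP k f)^[i]) (ll : Fin (m + 2))).val < k :=
    ⟨(wf k f).length + 1, by rw [spine_toP_top hk hk2 hf1 hf2]; exact zz_root hk⟩
  rw [mp, dif_pos hex]
  rw [Nat.find_eq_iff hex]
  constructor
  · rw [spine_toP_top hk hk2 hf1 hf2]; exact zz_root hk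
  · intro i hi
    rcases Nat.eq_zero_or_pos i with h0 | h0
    · subst h0; simpa using ll_not_root hk2
    · obtain ⟨j, rfl⟩ : ∃ j, i = j + 1 := ⟨i - 1, by omega⟩
      rw [spine_toP hk hk2 hf1 hf2 j (by omega)]
      rw [List.getD_eq_getElem _ _ (by omega)]
      exact cSet_not_root ((mem_wf_iff hf1).mp (List.getElem_mem (by omega)))

lemma wInt_toP (hk : 1 ≤ k) (hk2 : k ≤ m + 1)
    (hf1 : ∀ v : Fin (m + 2), v.val < k → f v = v) (hf2 : f ll = zz) :
    wInt k (toP k f) = wf k f := by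
  apply List.ext_getElem
  · rw [wInt_length, mp_toP hk hk2 hf1 hf2]
    omega
  · intro i h1 h2
    rw [wInt_getElem h1, spine_toP hk hk2 hf1 hf2 i (by omega), List.getD_eq_getElem _ _ h2]

lemma sC_toP (hk : 1 ≤ k) (hk2 : k ≤ m + 1)
    (hf1 : ∀ v : Fin (m + 2), v.val < k → f v = v) (hf2 : f ll = zz) :
    sC k (toP k f) = l1 k f := by
  rw [sC, wInt_toP hk hk2 hf1 hf2, wf_toFinset hf1, l1]

end ForestDef

namespace ForestDef
open ForestAux
open scoped Classical
variable {m k : ℕ} {p f g : Fin (m + 2) → Fin (m + 2)}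

lemma exists_iter_eq (g : Fin (m + 2) → Fin (m + 2)) (v : Fin (m + 2)) :
    ∃ a b, a < b ∧ g^[a] v = g^[b] v := by
  have hni : ¬ Function.Injective (fun t : Fin (m + 3) => g^[t.val] v) := by
    intro hinj
    have := Fintype.card_le_of_injective _ hinj
    simp at this
  rw [Function.not_injective_iff] at hni
  obtain ⟨a, b, hab, hne⟩ := hni
  have hne' : a.val ≠ b.val := fun h => hne (Fin.ext h)
  rcases Nat.lt_or_ge a.val b.val with h | h
  · exact ⟨a.val, b.val, h, hab⟩
  · exact ⟨b.val, a.val, by omega, hab.symm⟩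

lemma toP_fix_iff (hk : 1 ≤ k) (hk2 : k ≤ m + 1)
    (hf1 : ∀ v : Fin (m + 2), v.val < k → f v = v) (hf2 : f ll = zz) :
    ∀ v, toP k f v = v ↔ v.val < k := by
  intro v
  constructor
  case mpr => exact toP_root
  intro h
  by_contra hroot
  by_cases hll : v = ll
  · subst hll
    rw [toP_ll hk2] at h
    rcases Nat.lt_or_ge 0 (wf k f).length with hlen | hlen
    · rw [List.getD_eq_getElem _ _ hlen] at h
      have hmem : (wf k f)[0] ∈ cSet k f :=
        (mem_wf_iff hf1).mp (List.getElem_mem hlen)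
      rw [h] at hmem
      exact ll_not_cSet hk hf1 hf2 hmem
    · rw [List.getD_eq_default _ _ (by omega)] at h
      exact zz_ne_ll h
  by_cases hmem : v ∈ wf k f
  · rw [toP_mem hk hf1 hf2 hmem] at h
    set i := (wf k f).idxOf v with hidef
    have hi : i < (wf k f).length := List.idxOf_lt_length_iff.mpr hmem
    have hv : (wf k f)[i] = v := List.getElem_idxOf hi
    rcases Nat.lt_or_ge (i + 1) (wf k f).length with hlen | hlen
    · rw [List.getD_eq_getElem _ _ hlen, ← hv] at h
      have := (List.Nodup.getElem_inj_iff (wf_nodup (f := f))).mp h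
      omega
    · rw [List.getD_eq_default _ _ hlen] at h
      rw [← h] at hroot
      exact hroot (zz_root hk)
  · rw [toP_else hroot hll hmem] at h
    exact hmem ((mem_wf_iff hf1).mpr (mem_cSet_iff.mpr ⟨hroot, 1, by omega, by simpa using h⟩))

lemma wf_reach (hk : 1 ≤ k) (hk2 : k ≤ m + 1)
    (hf1 : ∀ v : Fin (m + 2), v.val < k → f v = v) (hf2 : f ll = zz)
    {x : Fin (m + 2)} (hx : x ∈ wf k f) : ∃ s, (toP k f)^[s] x = zz := by
  set j := (wf k f).idxOf x with hjdef
  have hj : j < (wf k f).length := List.idxOf_lt_length_iff.mpr hx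
  have hxv : (wf k f)[j] = x := List.getElem_idxOf hj
  refine ⟨(wf k f).length - j, ?_⟩
  have h1 : (toP k f)^[j + 1] (ll : Fin (m + 2)) = x := by
    rw [spine_toP hk hk2 hf1 hf2 j (by omega), List.getD_eq_getElem _ _ hj, hxv]
  have h2 : (toP k f)^[(wf k f).length - j] ((toP k f)^[j + 1] (ll : Fin (m + 2))) =
      (toP k f)^[(wf k f).length + 1] (ll : Fin (m + 2)) := by
    rw [← Function.iterate_add_apply]
    congr 1
    omega
  rw [h1] at h2
  rw [h2, spine_toP_top hk hk2 hf1 hf2]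

lemma toP_reach (hk : 1 ≤ k) (hk2 : k ≤ m + 1)
    (hf1 : ∀ v : Fin (m + 2), v.val < k → f v = v) (hf2 : f ll = zz) :
    ∀ v : Fin (m + 2), ∃ i, ((toP k f)^[i] v).val < k := by
  intro v
  by_contra hno
  rw [not_exists] at hno
  have hll : ∀ t, (toP k f)^[t] v ≠ ll := by
    intro t ht
    apply hno ((wf k f).length + 1 + t)
    rw [Function.iterate_add_apply, ht, spine_toP_top hk hk2 hf1 hf2]
    exact zz_root hk
  have hwf : ∀ t, (toP k f)^[t] v ∉ wf k f := by
    intro t ht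
    obtain ⟨s, hs⟩ := wf_reach hk hk2 hf1 hf2 ht
    apply hno (s + t)
    rw [Function.iterate_add_apply, hs]
    exact zz_root hk
  have heq : ∀ t, (toP k f)^[t] v = f^[t] v := by
    intro t
    induction t with
    | zero => rfl
    | succ t ih =>
      rw [Function.iterate_succ_apply', Function.iterate_succ_apply', ← ih,
        toP_else (hno t) (hll t) (hwf t)]
  obtain ⟨a, b, hab, habe⟩ := exists_iter_eq (toP k f) v
  have hper : Per f ((toP k f)^[a] v) := by
    refine ⟨b - a, by omega, ?_⟩
    rw [heq a, ← Function.iterate_add_apply]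
    rw [show b - a + a = b by omega, ← heq b, ← habe, heq a]
  apply hwf a
  rw [mem_wf_iff hf1, mem_cSet_iff]
  exact ⟨hno a, hper⟩

lemma PP_toP (hk : 1 ≤ k) (hk2 : k ≤ m + 1)
    (hf1 : ∀ v : Fin (m + 2), v.val < k → f v = v) (hf2 : f ll = zz) :
    PP k (toP k f) := by
  refine ⟨toP_fix_iff hk hk2 hf1 hf2, toP_reach hk hk2 hf1 hf2, ?_⟩
  exact ⟨(wf k f).length + 1, spine_toP_top hk hk2 hf1 hf2⟩

lemma toF_toP (hk : 1 ≤ k) (hk2 : k ≤ m + 1)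
    (hf1 : ∀ v : Fin (m + 2), v.val < k → f v = v) (hf2 : f ll = zz) :
    toF k (toP k f) = f := by
  funext v
  by_cases hroot : v.val < k
  · rw [toF_root hroot, hf1 v hroot]
  by_cases hll : v = ll
  · subst hll
    rw [toF_ll hk2, hf2]
  by_cases hmem : v ∈ sC k (toP k f)
  · rw [toF_mem hk2 (toP_reach hk hk2 hf1 hf2) hmem]
    rw [wInt_toP hk hk2 hf1 hf2, sC_toP hk hk2 hf1 hf2]
    rw [sC_toP hk hk2 hf1 hf2] at hmem
    set i := (l1 k f).idxOf v with hidef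
    have hi : i < (l1 k f).length := List.idxOf_lt_length_iff.mpr hmem
    have hi2 : i < (wf k f).length := by
      rw [wf, List.length_map]; exact hi
    rw [List.getD_eq_getElem _ _ hi2]
    have : (wf k f)[i] = f ((l1 k f)[i]) := by
      simp [wf]
    rw [this, List.getElem_idxOf hi]
  · rw [toF_else hroot hll hmem]
    rw [sC_toP hk hk2 hf1 hf2] at hmem
    apply toP_else hroot hll
    rw [mem_wf_iff hf1]
    intro h
    exact hmem (mem_l1_iff.mpr h)

end ForestDef

namespace ForestDef
open ForestAux
open scoped Classical
variable {m k : ℕ}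

noncomputable def mainEquiv (hk : 1 ≤ k) (hk2 : k ≤ m + 1) :
    {p : Fin (m + 2) → Fin (m + 2) // PP k p} ≃ {f : Fin (m + 2) → Fin (m + 2) // FF k f} where
  toFun p := ⟨toF k p.1, FF_toF hk2⟩
  invFun f := ⟨toP k f.1, PP_toP hk hk2 f.2.1 f.2.2⟩
  left_inv p := by
    obtain ⟨p, hp1, hp2, hp3⟩ := p
    exact Subtype.ext (toP_toF hk hk2 hp1 hp2 hp3)
  right_inv f := by
    obtain ⟨f, hf1, hf2⟩ := f
    exact Subtype.ext (toF_toP hk hk2 hf1 hf2)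

noncomputable def ffEquiv (hk2 : k ≤ m + 1) :
    {f : Fin (m + 2) → Fin (m + 2) // FF k f} ≃
      ({v : Fin (m + 2) // ¬ (v.val < k) ∧ v ≠ ll} → Fin (m + 2)) where
  toFun f v := f.1 v.1
  invFun g := ⟨fun v => if h : v.val < k then v else if h2 : v = ll then zz
      else g ⟨v, h, h2⟩, by
    constructor
    · intro v hv; simp [hv]
    · show (if h : (ll : Fin (m + 2)).val < k then (ll : Fin (m + 2)) else _) = zz
      rw [dif_neg (ll_not_root hk2), dif_pos rfl]⟩
  left_inv f := by
    obtain ⟨f, hf1, hf2⟩ := f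
    apply Subtype.ext
    funext v
    by_cases h : v.val < k
    · simp [h, hf1 v h]
    by_cases h2 : v = ll
    · subst h2; simp [h, hf2]
    · simp [h, h2]
  right_inv g := by
    funext v
    obtain ⟨v, h1, h2⟩ := v
    simp [h1, h2]

noncomputable def idxEquiv (hk2 : k ≤ m + 1) :
    {v : Fin (m + 2) // ¬ (v.val < k) ∧ v ≠ ll} ≃ Fin (m + 1 - k) where
  toFun v := ⟨v.1.val - k, by
    obtain ⟨⟨v, hv⟩, h1, h2⟩ := v
    simp only [ll, Ne, Fin.mk.injEq] at h2 ⊢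
    have : v ≠ m + 1 := fun h => h2 (by simp [h, Fin.ext_iff])
    simp at h1
    omega⟩
  invFun i := ⟨⟨k + i.val, by have := i.isLt; omega⟩, by
    constructor
    · simp
    · have := i.isLt
      simp [ll, Fin.ext_iff]
      omega⟩
  left_inv v := by
    obtain ⟨⟨v, hv⟩, h1, h2⟩ := v
    have : v ≠ m + 1 := fun h => h2 (by simp [ll, h, Fin.ext_iff])
    simp only [not_lt] at h1
    exact Subtype.ext (Fin.ext (show k + (v - k) = v by omega))
  right_inv i := by
    have := i.isLt
    exact Fin.ext (show k + i.val - k = i.val by omega)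

lemma card_PP (hk : 1 ≤ k) (hk2 : k ≤ m + 1) :
    Nat.card {p : Fin (m + 2) → Fin (m + 2) // PP k p} = (m + 2) ^ (m + 1 - k) := by
  rw [Nat.card_congr ((mainEquiv hk hk2).trans ((ffEquiv hk2).trans
    (Equiv.arrowCongr (idxEquiv hk2) (Equiv.refl _))))]
  rw [Nat.card_eq_fintype_card, Fintype.card_fun, Fintype.card_fin, Fintype.card_fin]

end ForestDef

/-- `p` is the parent function of a rooted forest on `Fin n` whose roots are
exactly the vertices `0, …, k-1` (representing labels `1, …, k`). -/
def IsRootedForest (n k : ℕ) (p : Fin n → Fin n) : Prop :=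
  (∀ v, p v = v ↔ v.val < k) ∧ ∀ v, ∃ m, ((p^[m]) v).val < k

theorem card_forest_n_desc_one (n k : ℕ) (hk : 1 ≤ k) (hk' : k ≤ n - 1) (hn : 2 ≤ n) :
    Nat.card {p : Fin n → Fin n // IsRootedForest n k p ∧
        ∃ m, p^[m] ⟨n - 1, by omega⟩ = ⟨0, by omega⟩} = n ^ (n - k - 1) := by
  obtain ⟨m, rfl⟩ : ∃ m, n = m + 2 := ⟨n - 2, by omega⟩
  have hk2 : k ≤ m + 1 := by omega
  have he : {p : Fin (m + 2) → Fin (m + 2) // IsRootedForest (m + 2) k p ∧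
        ∃ j, p^[j] ⟨m + 2 - 1, by omega⟩ = ⟨0, by omega⟩} ≃
      {p : Fin (m + 2) → Fin (m + 2) // ForestDef.PP k p} := by
    apply Equiv.subtypeEquivRight
    intro p
    constructor
    · rintro ⟨⟨a, b⟩, c⟩
      exact ⟨a, b, c⟩
    · rintro ⟨a, b, c⟩
      exact ⟨⟨a, b⟩, c⟩
  rw [Nat.card_congr he, ForestDef.card_PP hk hk2]
  congr 1
  omega
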